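/- Let A be an algebra of (S,φ)-type with respect to a presentation (π,P), and suppose there exists a section τ: S → ℕ^n of π (i.e. π ∘ τ = id_S) such that {𝐛^{τ(s)} : s ∈ S} is linearly independent over k. Then {𝐛^{τ(s)} : s ∈ S} is a basis of A, and A is isomorphic to the quotient of the free algebra on X_1,...,X_n by the ideal generated by the elements X_j X_i − c_{i,j} X_i X_j − Σ_{φ̃(ξ)<φ(s_i+s_j)} c_ξ^{i,j} X^ξ (for 1 ≤ i < j ≤ n) and X^{p_i'} − d_i X^{p_i} − Σ_{φ̃(ξ)<φ̃(p_i)} d_ξ^i X^ξ (for 1 ≤ i ≤ m), where X^ξ = X_1^{ξ_1} ⋯ X_n^{ξ_n}. -/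

import Mathlib

/-- Ordered monomial `𝐛^ξ = b₁^{ξ₁} ⋯ bₙ^{ξₙ}` in a (noncommutative) ring. -/
noncomputable def bpow {A : Type} [Ring A] {n : ℕ} (b : Fin n → A) (ξ : Fin n → ℕ) : A :=
  ((List.finRange n).map fun i => b i ^ ξ i).prod

/-- The canonical map `π : ℕ^n → S`, `ξ ↦ Σ ξ i • s i`. -/
def piMap {S : Type} [AddCommMonoid S] {n : ℕ} (s : Fin n → S) (ξ : Fin n → ℕ) : S :=
  ∑ i, ξ i • s i

/-- The filtration layer `F_l A = span { 𝐛^ξ : φ̃(ξ) ≤ l }`. -/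
noncomputable def typeFilt (k : Type) [Field k] {A : Type} [Ring A] [Algebra k A]
    {S : Type} [AddCommMonoid S] {n : ℕ} (s : Fin n → S) (φ : S →+ ℕ)
    (b : Fin n → A) (l : ℕ) : Submodule k A :=
  Submodule.span k {x | ∃ ξ : Fin n → ℕ, φ (piMap s ξ) ≤ l ∧ x = bpow b ξ}


/-- Ordered monomial `X^ξ = X₁^{ξ₁} ⋯ Xₙ^{ξₙ}` in the free algebra. -/
noncomputable def Xpow (k : Type) [Field k] {n : ℕ} (ξ : Fin n → ℕ) :
    FreeAlgebra k (Fin n) :=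
  ((List.finRange n).map fun i => FreeAlgebra.ι k i ^ ξ i).prod

/-- The commutation and straightening relations of an `(S,φ)`-type algebra on
the free algebra on `X₁, ..., Xₙ`; quotienting the free algebra by the relation
(`RingQuot`) is the same as quotienting by the two-sided ideal they generate. -/
noncomputable def relRel (k : Type) [Field k] (n m : ℕ)
    (c : Fin n → Fin n → k) (cc : Fin n → Fin n → ((Fin n → ℕ) →₀ k))
    (P : Fin m → (Fin n → ℕ) × (Fin n → ℕ)) (d : Fin m → k)
    (dd : Fin m → ((Fin n → ℕ) →₀ k)) :
    FreeAlgebra k (Fin n) → FreeAlgebra k (Fin n) → Prop := fun a b =>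
  (∃ i j : Fin n, i < j ∧ a = FreeAlgebra.ι k j * FreeAlgebra.ι k i ∧
      b = c i j • (FreeAlgebra.ι k i * FreeAlgebra.ι k j)
        + (cc i j).sum fun ξ x => x • Xpow k ξ) ∨
  (∃ i : Fin m, a = Xpow k (P i).2 ∧
      b = d i • Xpow k (P i).1 + (dd i).sum fun ξ x => x • Xpow k ξ)

namespace SPhi

variable {k : Type} [Field k] {A : Type} [Ring A] [Algebra k A]
variable {S : Type} [AddCommMonoid S] {n : ℕ}

def wrd (J : List (Fin n)) (ξ : Fin n → ℕ) : List (Fin n) :=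
  J.flatMap fun j => List.replicate (ξ j) j

def word (ξ : Fin n → ℕ) : List (Fin n) := wrd (List.finRange n) ξ

def pL (b : Fin n → A) (L : List (Fin n)) : A := (L.map b).prod

def cnt (L : List (Fin n)) : Fin n → ℕ := fun i => L.count i

lemma pL_nil (b : Fin n → A) : pL b ([] : List (Fin n)) = 1 := rfl

lemma pL_cons (b : Fin n → A) (a : Fin n) (L : List (Fin n)) :
    pL b (a :: L) = b a * pL b L := by simp [pL]

lemma pL_append (b : Fin n → A) (L M : List (Fin n)) :
    pL b (L ++ M) = pL b L * pL b M := by simp [pL]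

lemma pL_wrd (b : Fin n → A) (J : List (Fin n)) (ξ : Fin n → ℕ) :
    pL b (wrd J ξ) = (J.map fun i => b i ^ ξ i).prod := by
  induction J with
  | nil => rfl
  | cons a J ih =>
    simp only [wrd, List.flatMap_cons, List.map_cons, List.prod_cons, pL, List.map_append,
      List.prod_append] at *
    simp [List.map_replicate, ih]

lemma bpow_eq_pL (b : Fin n → A) (ξ : Fin n → ℕ) : bpow b ξ = pL b (word ξ) := by
  rw [bpow, word, pL_wrd]

lemma sum_wrd (s : Fin n → S) (J : List (Fin n)) (ξ : Fin n → ℕ) :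
    ((wrd J ξ).map s).sum = (J.map fun j => ξ j • s j).sum := by
  induction J with
  | nil => rfl
  | cons a J ih =>
    simp only [wrd, List.flatMap_cons, List.map_append, List.sum_append, List.map_cons,
      List.sum_cons] at *
    simp [List.map_replicate, List.sum_replicate, ih]

lemma sum_word (s : Fin n → S) (ξ : Fin n → ℕ) :
    ((word ξ).map s).sum = piMap s ξ := by
  rw [word, sum_wrd, piMap, Fin.sum_univ_def]

lemma piMap_add (s : Fin n → S) (ξ η : Fin n → ℕ) :
    piMap s (ξ + η) = piMap s ξ + piMap s η := by
  simp [piMap, add_smul, Finset.sum_add_distrib]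

lemma piMap_single (s : Fin n → S) (a : Fin n) :
    piMap s (Pi.single a 1) = s a := by
  rw [piMap, Finset.sum_eq_single a]
  · simp
  · intro i _ hi; simp [Pi.single_apply, hi]
  · simp

lemma cnt_cons (a : Fin n) (L : List (Fin n)) :
    cnt (a :: L) = cnt L + Pi.single a 1 := by
  funext i
  simp only [cnt, List.count_cons, Pi.add_apply, Pi.single_apply]
  by_cases h : i = a
  · subst h; simp
  · rw [if_neg h, if_neg (by simpa [beq_iff_eq] using Ne.symm h)]

lemma piMap_cnt (s : Fin n → S) (L : List (Fin n)) :
    piMap s (cnt L) = (L.map s).sum := by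
  induction L with
  | nil => simp [cnt, piMap]
  | cons a L ih => rw [cnt_cons, piMap_add, piMap_single, List.map_cons, List.sum_cons, ih,
      add_comm]

lemma count_wrd (J : List (Fin n)) (hJ : J.Nodup) (ξ : Fin n → ℕ) (i : Fin n) :
    (wrd J ξ).count i = if i ∈ J then ξ i else 0 := by
  induction J with
  | nil => simp [wrd]
  | cons a J ih =>
    simp only [wrd, List.flatMap_cons, List.count_append, List.count_replicate] at *
    rcases List.nodup_cons.mp hJ with ⟨ha, hJ'⟩
    by_cases h : i = a
    · subst h
      simp [ih hJ', ha]
    · simp [Ne.symm h, ih hJ', h]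

lemma cnt_word (ξ : Fin n → ℕ) : cnt (word ξ) = ξ := by
  funext i
  rw [cnt, word, count_wrd _ (List.nodup_finRange n)]
  simp [List.mem_finRange]

end SPhi

namespace SPhi

variable {n : ℕ}

lemma wrd_append (J₁ J₂ : List (Fin n)) (ξ : Fin n → ℕ) :
    wrd (J₁ ++ J₂) ξ = wrd J₁ ξ ++ wrd J₂ ξ := List.flatMap_append ..

lemma wrd_congr {J : List (Fin n)} {ξ ξ' : Fin n → ℕ} (h : ∀ j ∈ J, ξ j = ξ' j) :
    wrd J ξ = wrd J ξ' := by
  induction J with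
  | nil => rfl
  | cons a J ih =>
    simp only [wrd, List.flatMap_cons] at *
    rw [h a (by simp), ih fun j hj => h j (by simp [hj])]

lemma mem_wrd {J : List (Fin n)} {ξ : Fin n → ℕ} {j : Fin n} (h : j ∈ wrd J ξ) : j ∈ J := by
  induction J with
  | nil => simpa [wrd] using h
  | cons a J ih =>
    simp only [wrd, List.flatMap_cons, List.mem_append, List.mem_replicate] at h
    rcases h with ⟨-, rfl⟩ | h
    · simp
    · simp [ih h]

lemma sorted_dropWhile {l : List (Fin n)} (hl : l.Pairwise (· < ·)) {a : Fin n} (ha : a ∈ l) :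
    ∃ t, l.dropWhile (fun x => decide (x < a)) = a :: t ∧ ∀ j ∈ t, a < j := by
  induction l with
  | nil => simp at ha
  | cons x l ih =>
    rcases List.pairwise_cons.mp hl with ⟨hx, hl'⟩
    by_cases hxa : x < a
    · have hal : a ∈ l := by
        rcases List.mem_cons.mp ha with rfl | h
        · exact absurd hxa (lt_irrefl a)
        · exact h
      obtain ⟨t, ht, htgt⟩ := ih hl' hal
      exact ⟨t, by rw [List.dropWhile_cons, if_pos (by simpa using hxa)]; exact ht, htgt⟩
    · have hxeq : x = a := by
        rcases List.mem_cons.mp ha with rfl | h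
        · rfl
        · exact absurd (hx a h) hxa
      subst hxeq
      exact ⟨l, by rw [List.dropWhile_cons, if_neg (by simpa using hxa)], hx⟩

lemma wordSplit (a : Fin n) (ξ : Fin n → ℕ) :
    ∃ Lo Hi : List (Fin n), word ξ = Lo ++ Hi ∧
      word (ξ + Pi.single a 1) = Lo ++ a :: Hi ∧ ∀ j ∈ Lo, j < a := by
  obtain ⟨t, ht, htgt⟩ := sorted_dropWhile (List.pairwise_lt_finRange n) (List.mem_finRange a)
  have hlo : ∀ j ∈ (List.finRange n).takeWhile (fun x => decide (x < a)), j < a :=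
    fun j hj => by simpa using List.mem_takeWhile_imp hj
  have hw : ∀ η : Fin n → ℕ, word η =
      wrd ((List.finRange n).takeWhile (fun x => decide (x < a))) η ++ wrd (a :: t) η := by
    intro η
    conv_lhs => rw [word,
      ← List.takeWhile_append_dropWhile (p := fun x => decide (x < a)) (l := List.finRange n)]
    rw [wrd_append, ht]
  have h1 : wrd ((List.finRange n).takeWhile (fun x => decide (x < a))) (ξ + Pi.single a 1) =
      wrd ((List.finRange n).takeWhile (fun x => decide (x < a))) ξ := by
    refine wrd_congr fun j hj => ?_
    have : j ≠ a := ne_of_lt (hlo j hj)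
    simp [Pi.single_apply, this]
  have h2 : wrd t (ξ + Pi.single a 1) = wrd t ξ := by
    refine wrd_congr fun j hj => ?_
    have : j ≠ a := ne_of_gt (htgt j hj)
    simp [Pi.single_apply, this]
  refine ⟨wrd ((List.finRange n).takeWhile (fun x => decide (x < a))) ξ,
    List.replicate (ξ a) a ++ wrd t ξ, ?_, ?_, fun j hj => hlo j (mem_wrd hj)⟩
  · rw [hw ξ]
    simp only [wrd, List.flatMap_cons]
  · rw [hw (ξ + Pi.single a 1), h1]
    simp only [wrd, List.flatMap_cons]
    have hxa1 : (ξ + Pi.single a 1 : Fin n → ℕ) a = ξ a + 1 := by simp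
    rw [hxa1, List.replicate_succ]
    have h2' : (t.flatMap fun j => List.replicate ((ξ + Pi.single a 1 : Fin n → ℕ) j) j) =
        t.flatMap fun j => List.replicate (ξ j) j := h2
    rw [h2']
    simp

end SPhi

namespace SPhi

section Main

variable (k : Type) [Field k] {A : Type} [Ring A] [Algebra k A]
  {S : Type} [AddCommMonoid S] {n : ℕ}
  (s : Fin n → S) (φ : S →+ ℕ) (b : Fin n → A)

/-- weight of a word -/
def wt (L : List (Fin n)) : ℕ := φ ((L.map s).sum)

/-- strictly-below-`l` filtration layer -/
noncomputable def Bl (l : ℕ) : Submodule k A :=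
  Submodule.span k {x | ∃ ξ : Fin n → ℕ, φ (piMap s ξ) < l ∧ x = bpow b ξ}

lemma wt_nil : wt s φ ([] : List (Fin n)) = 0 := by simp [wt]

lemma wt_cons (a : Fin n) (L : List (Fin n)) :
    wt s φ (a :: L) = φ (s a) + wt s φ L := by simp [wt]

lemma wt_append (L M : List (Fin n)) :
    wt s φ (L ++ M) = wt s φ L + wt s φ M := by simp [wt]

lemma wt_word (ξ : Fin n → ℕ) : wt s φ (word ξ) = φ (piMap s ξ) := by
  rw [wt, sum_word]

lemma wt_cnt (L : List (Fin n)) : φ (piMap s (cnt L)) = wt s φ L := by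
  rw [piMap_cnt, wt]

lemma Bl_mono {l l' : ℕ} (h : l ≤ l') : Bl k s φ b l ≤ Bl k s φ b l' :=
  Submodule.span_mono fun _ ⟨ξ, hξ, hx⟩ => ⟨ξ, lt_of_lt_of_le hξ h, hx⟩

lemma mem_Bl {ξ : Fin n → ℕ} {l : ℕ} (h : φ (piMap s ξ) < l) :
    bpow b ξ ∈ Bl k s φ b l :=
  Submodule.subset_span ⟨ξ, h, rfl⟩

lemma bpow_zero : bpow b (0 : Fin n → ℕ) = 1 := by simp [bpow]

lemma cnt_nil : cnt ([] : List (Fin n)) = 0 := rfl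

/-- The main spanning predicate: every word of weight `l` is, up to a nonzero
scalar and lower terms, the ordered monomial of its exponent vector. -/
def Qprop (l : ℕ) : Prop :=
  ∀ L : List (Fin n), wt s φ L = l →
    ∃ u : k, u ≠ 0 ∧ pL b L - u • bpow b (cnt L) ∈ Bl k s φ b l

variable {k s φ b}

lemma hlow {l : ℕ} (hQ : ∀ l' < l, Qprop k s φ b l') {L : List (Fin n)}
    (h : wt s φ L < l) : pL b L ∈ Bl k s φ b l := by
  obtain ⟨u, -, hz⟩ := hQ (wt s φ L) h L rfl
  have h1 : pL b L = (pL b L - u • bpow b (cnt L)) + u • bpow b (cnt L) := by abel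
  rw [h1]
  exact Submodule.add_mem _ (Bl_mono k s φ b h.le hz)
    (Submodule.smul_mem _ _ (mem_Bl k s φ b (by rw [wt_cnt]; exact h)))

lemma mulL {l : ℕ} (hQ : ∀ l' < l, Qprop k s φ b l') (L : List (Fin n)) {l₁ : ℕ}
    (h : wt s φ L + l₁ ≤ l) {z : A} (hz : z ∈ Bl k s φ b l₁) :
    pL b L * z ∈ Bl k s φ b l := by
  induction hz using Submodule.span_induction with
  | mem x hx =>
    obtain ⟨ξ, hξ, rfl⟩ := hx
    rw [bpow_eq_pL, ← pL_append]
    exact hlow hQ (by rw [wt_append, wt_word]; omega)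
  | zero => rw [mul_zero]; exact Submodule.zero_mem _
  | add x y _ _ hx hy => rw [mul_add]; exact Submodule.add_mem _ hx hy
  | smul a x _ hx => rw [mul_smul_comm]; exact Submodule.smul_mem _ _ hx

lemma mulR {l : ℕ} (hQ : ∀ l' < l, Qprop k s φ b l') (M : List (Fin n)) {l₁ : ℕ}
    (h : l₁ + wt s φ M ≤ l) {z : A} (hz : z ∈ Bl k s φ b l₁) :
    z * pL b M ∈ Bl k s φ b l := by
  induction hz using Submodule.span_induction with
  | mem x hx =>
    obtain ⟨ξ, hξ, rfl⟩ := hx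
    rw [bpow_eq_pL, ← pL_append]
    exact hlow hQ (by rw [wt_append, wt_word]; omega)
  | zero => rw [zero_mul]; exact Submodule.zero_mem _
  | add x y _ _ hx hy => rw [add_mul]; exact Submodule.add_mem _ hx hy
  | smul a x _ hx => rw [smul_mul_assoc]; exact Submodule.smul_mem _ _ hx

end Main

end SPhi

namespace SPhi

section Main2

variable {k : Type} [Field k] {A : Type} [Ring A] [Algebra k A]
  {S : Type} [AddCommMonoid S] {n : ℕ}
  {s : Fin n → S} {φ : S →+ ℕ} {b : Fin n → A}

lemma SW {l : ℕ} (hQ : ∀ l' < l, Qprop k s φ b l')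
    {c : Fin n → Fin n → k} (hc : ∀ i j, c i j ≠ 0)
    {cc : Fin n → Fin n → ((Fin n → ℕ) →₀ k)}
    (hccsupp : ∀ i j ξ, cc i j ξ ≠ 0 → φ (piMap s ξ) < φ (s i + s j))
    (hcomm : ∀ i j : Fin n, i < j →
      b j * b i = c i j • (b i * b j) + (cc i j).sum fun ξ a => a • bpow b ξ)
    (a : Fin n) :
    ∀ M : List (Fin n), (∀ j ∈ M, j < a) → wt s φ (a :: M) ≤ l →
      ∃ u : k, u ≠ 0 ∧
        b a * pL b M - u • (pL b M * b a) ∈ Bl k s φ b (wt s φ (a :: M)) := by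
  intro M
  induction M with
  | nil =>
    intro _ _
    refine ⟨1, one_ne_zero, ?_⟩
    simp only [pL_nil, mul_one, one_mul, one_smul, sub_self]
    exact Submodule.zero_mem _
  | cons j M' ih =>
    intro hM hle
    have hj : j < a := hM j (by simp)
    have hM' : ∀ x ∈ M', x < a := fun x hx => hM x (by simp [hx])
    have hwt : wt s φ (a :: j :: M') = φ (s j) + wt s φ (a :: M') := by
      rw [wt_cons, wt_cons, wt_cons]; omega
    have hle' : wt s φ (a :: M') ≤ l := by omega
    obtain ⟨u', hu', hz⟩ := ih hM' hle'
    have hQ' : ∀ l' < wt s φ (a :: j :: M'), Qprop k s φ b l' :=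
      fun l' h' => hQ l' (lt_of_lt_of_le h' hle)
    refine ⟨c j a * u', mul_ne_zero (hc j a) hu', ?_⟩
    have key : b a * pL b (j :: M') - (c j a * u') • (pL b (j :: M') * b a)
        = c j a • (b j * (b a * pL b M' - u' • (pL b M' * b a)))
          + (cc j a).sum fun ξ x => x • (bpow b ξ * pL b M') := by
      rw [pL_cons, show b a * (b j * pL b M') = (b a * b j) * pL b M' from
        (mul_assoc _ _ _).symm, hcomm j a hj, add_mul, smul_mul_assoc, Finsupp.sum_mul]
      simp only [smul_mul_assoc, mul_sub, mul_smul_comm, smul_sub, smul_smul, mul_assoc]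
      abel
    rw [key]
    refine Submodule.add_mem _ (Submodule.smul_mem _ _ ?_) ?_
    · have hpl : pL b [j] * (b a * pL b M' - u' • (pL b M' * b a)) =
          b j * (b a * pL b M' - u' • (pL b M' * b a)) := by
        simp [pL_cons, pL_nil]
      rw [← hpl]
      refine mulL hQ' [j] ?_ hz
      rw [wt_cons, wt_nil, hwt]
      omega
    · refine Submodule.finsuppSum_mem _ _ _ _ fun ξ hξ => Submodule.smul_mem _ _ ?_
      have hb : φ (piMap s ξ) < φ (s j) + φ (s a) := by
        simpa [map_add] using hccsupp j a ξ hξ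
      rw [bpow_eq_pL, ← pL_append]
      refine hlow hQ' ?_
      rw [wt_append, wt_word, wt_cons]
      rw [wt_cons] at hwt ⊢
      omega

end Main2

end SPhi

namespace SPhi

section Main3

variable {k : Type} [Field k] {A : Type} [Ring A] [Algebra k A]
  {S : Type} [AddCommMonoid S] {n : ℕ}
  {s : Fin n → S} {φ : S →+ ℕ} {b : Fin n → A}

theorem Qall (hspos : ∀ i, 0 < φ (s i))
    {c : Fin n → Fin n → k} (hc : ∀ i j, c i j ≠ 0)
    {cc : Fin n → Fin n → ((Fin n → ℕ) →₀ k)}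
    (hccsupp : ∀ i j ξ, cc i j ξ ≠ 0 → φ (piMap s ξ) < φ (s i + s j))
    (hcomm : ∀ i j : Fin n, i < j →
      b j * b i = c i j • (b i * b j) + (cc i j).sum fun ξ a => a • bpow b ξ)
    (l : ℕ) : Qprop k s φ b l := by
  induction l using Nat.strong_induction_on with
  | _ l hQ =>
  intro L hL
  match L with
  | [] =>
    refine ⟨1, one_ne_zero, ?_⟩
    rw [pL_nil, cnt_nil, bpow_zero, one_smul, sub_self]
    exact Submodule.zero_mem _
  | a :: L' =>
    have hwt : wt s φ (a :: L') = φ (s a) + wt s φ L' := wt_cons s φ a L'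
    have hL' : wt s φ L' < l := by have := hspos a; omega
    obtain ⟨u, hu, hz1⟩ := hQ (wt s φ L') hL' L' rfl
    have hQl : ∀ l' < l, Qprop k s φ b l' := hQ
    -- step 1 : pL (a::L') - u • (b a * bpow (cnt L')) ∈ Bl l
    have step1 : pL b (a :: L') - u • (b a * bpow b (cnt L')) ∈ Bl k s φ b l := by
      have heq : pL b (a :: L') - u • (b a * bpow b (cnt L')) =
          pL b [a] * (pL b L' - u • bpow b (cnt L')) := by
        simp [pL_cons, pL_nil, mul_sub, mul_smul_comm]
      rw [heq]
      refine mulL hQl [a] ?_ hz1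
      rw [wt_cons, wt_nil, ← hL, hwt]
      omega
    obtain ⟨Lo, Hi, hw1, hw2, hLo⟩ := wordSplit a (cnt L')
    have hwLoHi : wt s φ Lo + wt s φ Hi = wt s φ L' := by
      have : wt s φ (word (cnt L')) = wt s φ L' := by rw [wt_word, wt_cnt]
      rw [← this, hw1, wt_append]
    have hle2 : wt s φ (a :: Lo) ≤ l := by rw [wt_cons, ← hL, hwt]; omega
    obtain ⟨u'', hu'', hz2⟩ := SW hQ hc hccsupp hcomm a Lo hLo hle2
    -- step 2 : (b a * pL Lo - u'' • (pL Lo * b a)) * pL Hi ∈ Bl l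
    have step2 : (b a * pL b Lo - u'' • (pL b Lo * b a)) * pL b Hi ∈ Bl k s φ b l := by
      refine mulR hQl Hi ?_ hz2
      rw [wt_cons, ← hL, hwt]; omega
    have hmono : b a * bpow b (cnt L') - u'' • bpow b (cnt (a :: L')) ∈ Bl k s φ b l := by
      have e1 : b a * bpow b (cnt L') = b a * pL b Lo * pL b Hi := by
        rw [bpow_eq_pL, hw1, pL_append, mul_assoc]
      have e2 : bpow b (cnt (a :: L')) = pL b Lo * b a * pL b Hi := by
        rw [cnt_cons, bpow_eq_pL, hw2, pL_append, pL_cons, mul_assoc]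
      have e3 : b a * bpow b (cnt L') - u'' • bpow b (cnt (a :: L')) =
          (b a * pL b Lo - u'' • (pL b Lo * b a)) * pL b Hi := by
        rw [e1, e2, sub_mul, smul_mul_assoc]
      rw [e3]; exact step2
    refine ⟨u * u'', mul_ne_zero hu hu'', ?_⟩
    have comb : pL b (a :: L') - (u * u'') • bpow b (cnt (a :: L')) =
        (pL b (a :: L') - u • (b a * bpow b (cnt L')))
          + u • (b a * bpow b (cnt L') - u'' • bpow b (cnt (a :: L'))) := by
      rw [smul_sub, smul_smul]; abel
    rw [comb]
    exact Submodule.add_mem _ step1 (Submodule.smul_mem _ _ hmono)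

end Main3

end SPhi

namespace SPhi

section Main4

variable {k : Type} [Field k] {A : Type} [Ring A] [Algebra k A]
  {S : Type} [AddCommMonoid S] {n : ℕ}
  {s : Fin n → S} {φ : S →+ ℕ} {b : Fin n → A}

lemma smul_cancel_mem {p : Submodule k A} {v : k} (hv : v ≠ 0) {x : A}
    (h : v • x ∈ p) : x ∈ p := by
  have h2 := p.smul_mem v⁻¹ h
  rwa [smul_smul, inv_mul_cancel₀ hv, one_smul] at h2

lemma cnt_append (L M : List (Fin n)) : cnt (L ++ M) = cnt L + cnt M := by
  funext i; simp [cnt, List.count_append]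

lemma word_zero : word (0 : Fin n → ℕ) = [] := by
  simp [word, wrd]

lemma bpow_single (i : Fin n) : bpow b (Pi.single i 1) = b i := by
  obtain ⟨Lo, Hi, hw1, hw2, -⟩ := wordSplit i (0 : Fin n → ℕ)
  rw [word_zero] at hw1
  obtain ⟨h1, h2⟩ := List.append_eq_nil_iff.mp hw1.symm
  subst h1; subst h2
  rw [zero_add] at hw2
  rw [bpow_eq_pL, hw2]
  simp [pL_cons, pL_nil]

variable (hspos : ∀ i, 0 < φ (s i))
  {c : Fin n → Fin n → k} (hc : ∀ i j, c i j ≠ 0)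
  {cc : Fin n → Fin n → ((Fin n → ℕ) →₀ k)}
  (hccsupp : ∀ i j ξ, cc i j ξ ≠ 0 → φ (piMap s ξ) < φ (s i + s j))
  (hcomm : ∀ i j : Fin n, i < j →
    b j * b i = c i j • (b i * b j) + (cc i j).sum fun ξ a => a • bpow b ξ)

include hspos hc hccsupp hcomm in
lemma MUL (ξ η : Fin n → ℕ) :
    ∃ u : k, u ≠ 0 ∧ bpow b ξ * bpow b η - u • bpow b (ξ + η) ∈
      Bl k s φ b (φ (piMap s ξ) + φ (piMap s η)) := by
  obtain ⟨u, hu, hz⟩ := Qall hspos hc hccsupp hcomm (wt s φ (word ξ ++ word η))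
    (word ξ ++ word η) rfl
  have e1 : pL b (word ξ ++ word η) = bpow b ξ * bpow b η := by
    rw [pL_append, bpow_eq_pL, bpow_eq_pL]
  have e2 : cnt (word ξ ++ word η) = ξ + η := by
    rw [cnt_append, cnt_word, cnt_word]
  have e3 : wt s φ (word ξ ++ word η) = φ (piMap s ξ) + φ (piMap s η) := by
    rw [wt_append, wt_word, wt_word]
  rw [e1, e2, e3] at hz
  exact ⟨u, hu, hz⟩

end Main4

end SPhi

namespace SPhi

section Main5

variable {k : Type} [Field k] {A : Type} [Ring A] [Algebra k A]
  {S : Type} [AddCommMonoid S] {n m : ℕ}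
  {s : Fin n → S} {φ : S →+ ℕ} {b : Fin n → A}
  {P : Fin m → (Fin n → ℕ) × (Fin n → ℕ)} {d : Fin m → k}
  {dd : Fin m → ((Fin n → ℕ) →₀ k)}
  (hspos : ∀ i, 0 < φ (s i))
  {c : Fin n → Fin n → k} (hc : ∀ i j, c i j ≠ 0)
  {cc : Fin n → Fin n → ((Fin n → ℕ) →₀ k)}
  (hccsupp : ∀ i j ξ, cc i j ξ ≠ 0 → φ (piMap s ξ) < φ (s i + s j))
  (hcomm : ∀ i j : Fin n, i < j →
    b j * b i = c i j • (b i * b j) + (cc i j).sum fun ξ a => a • bpow b ξ)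
  (hP : ∀ ξ ν : Fin n → ℕ,
    addConGen (fun a b => ∃ i : Fin m, a = (P i).1 ∧ b = (P i).2) ξ ν ↔
      piMap s ξ = piMap s ν)
  (hd : ∀ i, d i ≠ 0)
  (hddsupp : ∀ i ξ, dd i ξ ≠ 0 → φ (piMap s ξ) < φ (piMap s (P i).1))
  (hstr : ∀ i : Fin m,
    bpow b (P i).2 = d i • bpow b (P i).1 + (dd i).sum fun ξ a => a • bpow b ξ)

include hspos hc hccsupp hcomm hP hd hddsupp hstr in
lemma straighten {ξ ν : Fin n → ℕ} (h : piMap s ξ = piMap s ν) :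
    ∃ u : k, u ≠ 0 ∧ bpow b ξ - u • bpow b ν ∈ Bl k s φ b (φ (piMap s ξ)) := by
  have hrel : AddConGen.Rel (fun a b => ∃ i : Fin m, a = (P i).1 ∧ b = (P i).2) ξ ν :=
    (hP ξ ν).mpr h
  clear h
  induction hrel with
  | of x y hxy =>
    obtain ⟨i, rfl, rfl⟩ := hxy
    refine ⟨(d i)⁻¹, inv_ne_zero (hd i), smul_cancel_mem (hd i) ?_⟩
    have e : d i • (bpow b (P i).1 - (d i)⁻¹ • bpow b (P i).2) =
        -((dd i).sum fun ξ a => a • bpow b ξ) := by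
      rw [smul_sub, smul_smul, mul_inv_cancel₀ (hd i), one_smul, hstr i]
      abel
    rw [e]
    refine Submodule.neg_mem _ (Submodule.finsuppSum_mem _ _ _ _
      fun η hη => Submodule.smul_mem _ _ (mem_Bl k s φ b (hddsupp i η hη)))
  | refl x =>
    refine ⟨1, one_ne_zero, ?_⟩
    rw [one_smul, sub_self]
    exact Submodule.zero_mem _
  | symm hxy ih =>
    rename_i x y
    obtain ⟨u, hu, hz⟩ := ih
    have hw : φ (piMap s x) = φ (piMap s y) := by rw [(hP x y).mp hxy]
    refine ⟨u⁻¹, inv_ne_zero hu, smul_cancel_mem hu ?_⟩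
    have e : u • (bpow b y - u⁻¹ • bpow b x) = -(bpow b x - u • bpow b y) := by
      rw [smul_sub, smul_smul, mul_inv_cancel₀ hu, one_smul]
      abel
    rw [e, ← hw]
    exact Submodule.neg_mem _ hz
  | trans hxy hyz ih1 ih2 =>
    rename_i x y z
    obtain ⟨u1, hu1, hz1⟩ := ih1
    obtain ⟨u2, hu2, hz2⟩ := ih2
    have hw : φ (piMap s x) = φ (piMap s y) := by rw [(hP x y).mp hxy]
    refine ⟨u1 * u2, mul_ne_zero hu1 hu2, ?_⟩
    have e : bpow b x - (u1 * u2) • bpow b z =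
        (bpow b x - u1 • bpow b y) + u1 • (bpow b y - u2 • bpow b z) := by
      rw [smul_sub, smul_smul]
      abel
    rw [e]
    refine Submodule.add_mem _ hz1 (Submodule.smul_mem _ _ ?_)
    rw [hw]
    exact hz2
  | add hwx hyz ih1 ih2 =>
    rename_i w x y z
    obtain ⟨u1, hu1, hz1⟩ := ih1
    obtain ⟨u2, hu2, hz2⟩ := ih2
    have hww : φ (piMap s w) = φ (piMap s x) := by rw [(hP w x).mp hwx]
    have hyy : φ (piMap s y) = φ (piMap s z) := by rw [(hP y z).mp hyz]
    have hL : φ (piMap s (w + y)) = φ (piMap s w) + φ (piMap s y) := by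
      rw [piMap_add, map_add]
    obtain ⟨v, hv, m1⟩ := MUL hspos hc hccsupp hcomm w y
    obtain ⟨v', hv', m2⟩ := MUL hspos hc hccsupp hcomm x z
    rw [← hww, ← hyy] at m2
    have hQl : ∀ l' < φ (piMap s w) + φ (piMap s y), Qprop k s φ b l' :=
      fun l' _ => Qall hspos hc hccsupp hcomm l'
    have mid : bpow b w * bpow b y - (u1 * u2) • (bpow b x * bpow b z) ∈
        Bl k s φ b (φ (piMap s w) + φ (piMap s y)) := by
      have e : bpow b w * bpow b y - (u1 * u2) • (bpow b x * bpow b z) =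
          (bpow b w - u1 • bpow b x) * bpow b y
            + u1 • (bpow b x * (bpow b y - u2 • bpow b z)) := by
        simp only [sub_mul, mul_sub, smul_sub, smul_mul_assoc, mul_smul_comm, smul_smul]
        abel
      rw [e]
      refine Submodule.add_mem _ ?_ (Submodule.smul_mem _ _ ?_)
      · rw [show bpow b y = pL b (word y) from bpow_eq_pL b y]
        refine mulR hQl (word y) ?_ hz1
        rw [wt_word]
      · rw [show bpow b x = pL b (word x) from bpow_eq_pL b x]
        refine mulL hQl (word x) ?_ hz2
        rw [wt_word, hww]
    refine ⟨v⁻¹ * (u1 * u2 * v'),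
      mul_ne_zero (inv_ne_zero hv) (mul_ne_zero (mul_ne_zero hu1 hu2) hv'), ?_⟩
    refine smul_cancel_mem hv ?_
    have hvv : v * (v⁻¹ * (u1 * u2 * v')) = u1 * u2 * v' := by
      field_simp
    have e : v • (bpow b (w + y) - (v⁻¹ * (u1 * u2 * v')) • bpow b (x + z)) =
        -(bpow b w * bpow b y - v • bpow b (w + y))
          + (bpow b w * bpow b y - (u1 * u2) • (bpow b x * bpow b z))
          + (u1 * u2) • (bpow b x * bpow b z - v' • bpow b (x + z)) := by
      rw [smul_sub, smul_smul, hvv]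
      simp only [smul_sub, smul_smul]
      abel
    rw [e, hL]
    refine Submodule.add_mem _ (Submodule.add_mem _ (Submodule.neg_mem _ m1) mid)
      (Submodule.smul_mem _ _ m2)

end Main5

end SPhi

namespace SPhi

section Main6

variable {k : Type} [Field k] {A : Type} [Ring A] [Algebra k A]
  {S : Type} [AddCommMonoid S] {n m : ℕ}
  {s : Fin n → S} {φ : S →+ ℕ} {b : Fin n → A}
  {P : Fin m → (Fin n → ℕ) × (Fin n → ℕ)} {d : Fin m → k}
  {dd : Fin m → ((Fin n → ℕ) →₀ k)}
  (hspos : ∀ i, 0 < φ (s i))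
  {c : Fin n → Fin n → k} (hc : ∀ i j, c i j ≠ 0)
  {cc : Fin n → Fin n → ((Fin n → ℕ) →₀ k)}
  (hccsupp : ∀ i j ξ, cc i j ξ ≠ 0 → φ (piMap s ξ) < φ (s i + s j))
  (hcomm : ∀ i j : Fin n, i < j →
    b j * b i = c i j • (b i * b j) + (cc i j).sum fun ξ a => a • bpow b ξ)
  (hP : ∀ ξ ν : Fin n → ℕ,
    addConGen (fun a b => ∃ i : Fin m, a = (P i).1 ∧ b = (P i).2) ξ ν ↔
      piMap s ξ = piMap s ν)
  (hd : ∀ i, d i ≠ 0)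
  (hddsupp : ∀ i ξ, dd i ξ ≠ 0 → φ (piMap s ξ) < φ (piMap s (P i).1))
  (hstr : ∀ i : Fin m,
    bpow b (P i).2 = d i • bpow b (P i).1 + (dd i).sum fun ξ a => a • bpow b ξ)

include hspos hc hccsupp hcomm hP hd hddsupp hstr in
theorem spanTop (τ : S → (Fin n → ℕ)) (hτ : ∀ t, piMap s (τ t) = t)
    (hgen : Algebra.adjoin k (Set.range b) = ⊤) :
    Submodule.span k (Set.range fun t : S => bpow b (τ t)) = ⊤ := by
  set G := Submodule.span k (Set.range fun t : S => bpow b (τ t)) with hG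
  have hbp : ∀ l (ξ : Fin n → ℕ), φ (piMap s ξ) = l → bpow b ξ ∈ G := by
    intro l
    induction l using Nat.strong_induction_on with
    | _ l ih =>
    intro ξ hξ
    obtain ⟨u, hu, hz⟩ := straighten hspos hc hccsupp hcomm hP hd hddsupp hstr
      (show piMap s ξ = piMap s (τ (piMap s ξ)) from (hτ _).symm)
    have hBl : Bl k s φ b (φ (piMap s ξ)) ≤ G := by
      rw [Bl]
      refine Submodule.span_le.mpr ?_
      rintro x ⟨η, hη, rfl⟩
      exact ih (φ (piMap s η)) (by omega) η rfl
    have he : bpow b ξ = (bpow b ξ - u • bpow b (τ (piMap s ξ)))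
        + u • bpow b (τ (piMap s ξ)) := by abel
    rw [he]
    exact Submodule.add_mem _ (hBl hz)
      (Submodule.smul_mem _ _ (Submodule.subset_span ⟨piMap s ξ, rfl⟩))
  have hbp' : ∀ ξ : Fin n → ℕ, bpow b ξ ∈ G := fun ξ => hbp _ ξ rfl
  set M := Submodule.span k {x : A | ∃ ξ : Fin n → ℕ, x = bpow b ξ} with hM
  have h1 : (1 : A) ∈ M := Submodule.subset_span ⟨0, (bpow_zero b).symm⟩
  have hgen2 : ∀ ξ η : Fin n → ℕ, bpow b ξ * bpow b η ∈ M := by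
    intro ξ η
    obtain ⟨u, hu, hz⟩ := MUL hspos hc hccsupp hcomm ξ η
    have hBlM : Bl k s φ b (φ (piMap s ξ) + φ (piMap s η)) ≤ M := by
      rw [Bl]
      exact Submodule.span_le.mpr fun x ⟨ζ, _, hx⟩ => Submodule.subset_span ⟨ζ, hx⟩
    have he : bpow b ξ * bpow b η =
        (bpow b ξ * bpow b η - u • bpow b (ξ + η)) + u • bpow b (ξ + η) := by abel
    rw [he]
    exact Submodule.add_mem _ (hBlM hz)
      (Submodule.smul_mem _ _ (Submodule.subset_span ⟨ξ + η, rfl⟩))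
  have hmul : ∀ x y : A, x ∈ M → y ∈ M → x * y ∈ M := by
    intro x y hx hy
    induction hx using Submodule.span_induction with
    | mem x hxm =>
      obtain ⟨ξ, rfl⟩ := hxm
      induction hy using Submodule.span_induction with
      | mem y hym => obtain ⟨η, rfl⟩ := hym; exact hgen2 ξ η
      | zero => rw [mul_zero]; exact Submodule.zero_mem _
      | add y z _ _ ihy ihz => rw [mul_add]; exact Submodule.add_mem _ ihy ihz
      | smul a y _ ihy => rw [mul_smul_comm]; exact Submodule.smul_mem _ _ ihy
    | zero => rw [zero_mul]; exact Submodule.zero_mem _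
    | add x z _ _ ihx ihz => rw [add_mul]; exact Submodule.add_mem _ ihx ihz
    | smul a x _ ihx => rw [smul_mul_assoc]; exact Submodule.smul_mem _ _ ihx
  have hadj : Algebra.adjoin k (Set.range b) ≤ Submodule.toSubalgebra M h1 hmul := by
    refine Algebra.adjoin_le ?_
    rintro x ⟨i, rfl⟩
    exact Submodule.subset_span ⟨Pi.single i 1, (bpow_single i).symm⟩
  rw [hgen] at hadj
  have hMG : M ≤ G := Submodule.span_le.mpr fun x ⟨ξ, hx⟩ => hx ▸ hbp' ξ
  refine eq_top_iff.mpr fun x _ => hMG (hadj (by trivial))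

end Main6

end SPhi

namespace SPhi

lemma map_bpow {k : Type} [Field k] {A B : Type} [Ring A] [Ring B] [Algebra k A]
    [Algebra k B] (f : A →ₐ[k] B) {n : ℕ} (b : Fin n → A) (ξ : Fin n → ℕ) :
    f (bpow b ξ) = bpow (fun i => f (b i)) ξ := by
  simp [bpow, map_list_prod, List.map_map, Function.comp_def, map_pow]

end SPhi

/-- Let `A` be an algebra of `(S,φ)`-type with respect to a
presentation `(π,P)`, and suppose there is a section `τ` of `π` such that the
monomials `{𝐛^{τ(t)} : t ∈ S}` are linearly independent. Then these monomials
form a basis of `A` (they also span), and `A` is isomorphic, as a `k`-algebra,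
to the quotient of the free algebra on `X₁,...,Xₙ` by the ideal generated by
the commutation and straightening relations, via `Xᵢ ↦ bᵢ`. -/
theorem s_phi_type_presentation
    (k : Type) [Field k] (A : Type) [Ring A] [Algebra k A]
    (S : Type) [AddCancelCommMonoid S]
    (n m : ℕ) (s : Fin n → S)
    (hsurj : Function.Surjective (piMap s))
    (hs : Set.range s = {t : S | t ≠ 0 ∧ ∀ x y : S, t = x + y → x = 0 ∨ y = 0})
    (φ : S →+ ℕ) (hφ : ∀ t : S, φ t = 0 → t = 0)
    (P : Fin m → (Fin n → ℕ) × (Fin n → ℕ))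
    (hP : ∀ ξ ν : Fin n → ℕ,
      addConGen (fun a b => ∃ i : Fin m, a = (P i).1 ∧ b = (P i).2) ξ ν ↔
        piMap s ξ = piMap s ν)
    (b : Fin n → A) (hgen : Algebra.adjoin k (Set.range b) = ⊤)
    (c : Fin n → Fin n → k) (hc : ∀ i j : Fin n, c i j ≠ 0)
    (cc : Fin n → Fin n → ((Fin n → ℕ) →₀ k))
    (hccsupp : ∀ (i j : Fin n) (ξ : Fin n → ℕ), cc i j ξ ≠ 0 →
      φ (piMap s ξ) < φ (s i + s j))
    (hcomm : ∀ i j : Fin n, i < j →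
      b j * b i = c i j • (b i * b j) + (cc i j).sum fun ξ a => a • bpow b ξ)
    (d : Fin m → k) (hd : ∀ i, d i ≠ 0)
    (dd : Fin m → ((Fin n → ℕ) →₀ k))
    (hddsupp : ∀ (i : Fin m) (ξ : Fin n → ℕ), dd i ξ ≠ 0 →
      φ (piMap s ξ) < φ (piMap s (P i).1))
    (hstr : ∀ i : Fin m,
      bpow b (P i).2 = d i • bpow b (P i).1 + (dd i).sum fun ξ a => a • bpow b ξ)
    (τ : S → (Fin n → ℕ)) (hτ : ∀ t : S, piMap s (τ t) = t)
    (hLI : LinearIndependent k fun t : S => bpow b (τ t)) :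
    Submodule.span k (Set.range fun t : S => bpow b (τ t)) = ⊤ ∧
    ∃ e : RingQuot (relRel k n m c cc P d dd) ≃ₐ[k] A,
      ∀ i : Fin n,
        e (RingQuot.mkAlgHom k (relRel k n m c cc P d dd) (FreeAlgebra.ι k i)) = b i := by
  
  have hspos : ∀ i, 0 < φ (s i) := by
    intro i
    have hmem : s i ∈ {t : S | t ≠ 0 ∧ ∀ x y : S, t = x + y → x = 0 ∨ y = 0} := by
      rw [← hs]; exact ⟨i, rfl⟩
    exact Nat.pos_of_ne_zero fun h0 => hmem.1 (hφ _ h0)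
  have span1 := SPhi.spanTop hspos hc hccsupp hcomm hP hd hddsupp hstr τ hτ hgen
  refine ⟨span1, ?_⟩
  set r := relRel k n m c cc P d dd with hr
  set F : FreeAlgebra k (Fin n) →ₐ[k] A := FreeAlgebra.lift k b with hF
  have hFι : ∀ i, F (FreeAlgebra.ι k i) = b i := fun i => FreeAlgebra.lift_ι_apply b i
  have hFX : ∀ ξ : Fin n → ℕ, F (Xpow k ξ) = bpow b ξ := by
    intro ξ
    rw [show Xpow k ξ = bpow (FreeAlgebra.ι k) ξ from rfl, SPhi.map_bpow]
    simp only [hFι]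
  have hFrel : ∀ ⦃x y⦄, r x y → F x = F y := by
    rintro x y (⟨i, j, hij, rfl, rfl⟩ | ⟨i, rfl, rfl⟩)
    · rw [map_mul, map_add, map_smul, map_mul, map_finsuppSum]
      simp only [map_smul, hFX, hFι]
      exact hcomm i j hij
    · rw [map_add, map_smul, map_finsuppSum]
      simp only [map_smul, hFX]
      exact hstr i
  set e₀ : RingQuot r →ₐ[k] A := RingQuot.liftAlgHom k ⟨F, hFrel⟩ with he₀
  set β : Fin n → RingQuot r := fun i => RingQuot.mkAlgHom k r (FreeAlgebra.ι k i) with hβ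
  have he₀β : ∀ i, e₀ (β i) = b i := by
    intro i
    rw [hβ, he₀, RingQuot.liftAlgHom_mkAlgHom_apply]
    exact hFι i
  have hmkX : ∀ ξ, RingQuot.mkAlgHom k r (Xpow k ξ) = bpow β ξ := by
    intro ξ
    rw [show Xpow k ξ = bpow (FreeAlgebra.ι k) ξ from rfl, SPhi.map_bpow]
  have hgenβ : Algebra.adjoin k (Set.range β) = ⊤ := by
    have h1 : Set.range β = ⇑(RingQuot.mkAlgHom k r) '' Set.range (FreeAlgebra.ι k) := by
      rw [← Set.range_comp]; rfl
    rw [h1, ← AlgHom.map_adjoin, FreeAlgebra.adjoin_range_ι, Algebra.map_top]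
    exact (AlgHom.range_eq_top _).mpr (RingQuot.mkAlgHom_surjective k r)
  have hcommβ : ∀ i j : Fin n, i < j →
      β j * β i = c i j • (β i * β j) + (cc i j).sum fun ξ a => a • bpow β ξ := by
    intro i j hij
    have h2 := RingQuot.mkAlgHom_rel k (s := r) (Or.inl ⟨i, j, hij, rfl, rfl⟩)
    rw [map_mul, map_add, map_smul, map_mul, map_finsuppSum] at h2
    simpa only [map_smul, hmkX] using h2
  have hstrβ : ∀ i : Fin m,
      bpow β (P i).2 = d i • bpow β (P i).1 + (dd i).sum fun ξ a => a • bpow β ξ := by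
    intro i
    have h2 := RingQuot.mkAlgHom_rel k (s := r) (Or.inr ⟨i, rfl, rfl⟩)
    rw [map_add, map_smul, map_finsuppSum] at h2
    rw [← hmkX, h2]
    simp only [map_smul, hmkX]
  have spanβ := SPhi.spanTop hspos hc hccsupp hcommβ hP hd hddsupp hstrβ τ hτ hgenβ
  have he₀bp : ∀ ξ, e₀ (bpow β ξ) = bpow b ξ := by
    intro ξ
    rw [SPhi.map_bpow]
    congr 1
    funext i
    exact he₀β i
  have hinj : Function.Injective e₀ := by
    rw [injective_iff_map_eq_zero]
    intro x hx
    have hxm : x ∈ Submodule.span k (Set.range fun t : S => bpow β (τ t)) := by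
      rw [spanβ]; exact Submodule.mem_top
    obtain ⟨f, hf⟩ := Finsupp.mem_span_range_iff_exists_finsupp.mp hxm
    have h0 : (Finsupp.linearCombination k fun t : S => bpow b (τ t)) f = 0 := by
      rw [Finsupp.linearCombination_apply]
      have h3 : e₀ (f.sum fun t a => a • bpow β (τ t)) =
          f.sum fun t a => a • bpow b (τ t) := by
        rw [map_finsuppSum]
        exact Finsupp.sum_congr fun t _ => by rw [map_smul, he₀bp]
      rw [← h3, hf, hx]
    have hf0 := linearIndependent_iff.mp hLI f h0
    rw [← hf, hf0, Finsupp.sum_zero_index]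
  have hsurj2 : Function.Surjective e₀ := by
    have hle : Algebra.adjoin k (Set.range b) ≤ e₀.range :=
      Algebra.adjoin_le (by rintro x ⟨i, rfl⟩; exact ⟨β i, he₀β i⟩)
    rw [hgen] at hle
    intro x
    obtain ⟨y, hy⟩ := hle (show x ∈ ⊤ from trivial)
    exact ⟨y, hy⟩
  exact ⟨AlgEquiv.ofBijective e₀ ⟨hinj, hsurj2⟩, fun i => he₀β i⟩
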